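/- Let A be a stable matching instance and B obtained from A by moving one worker w upward in one firm f's preference list (an upward shift), all else unchanged. If a perfect matching M is stable under A but not under B, then the unique blocking pair of M under B is (w, f). -/
import Mathlib


/-- A stable matching instance: each worker `w` ranks firms via `wr w` (lower rank =
more preferred, rank = position in the preference list) and each firm `f` ranks
workers via `fr f`. -/
structure SMInstance (W F : Type) where
  wr : W → F → ℕ
  fr : F → W → ℕ
  wr_inj : ∀ w, Function.Injective (wr w)
  fr_inj : ∀ f, Function.Injective (fr f)

variable {W F : Type}

/-- `(w, f)` is a blocking pair for the matching `M` under instance `A`. -/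
def SMInstance.Blocking (A : SMInstance W F) (M : W ≃ F) (w : W) (f : F) : Prop :=
  M w ≠ f ∧ A.wr w f < A.wr w (M w) ∧ A.fr f w < A.fr f (M.symm f)

/-- `M` is stable under `A`: it has no blocking pair. -/
def SMInstance.Stable (A : SMInstance W F) (M : W ≃ F) : Prop :=
  ∀ w f, ¬ A.Blocking M w f

/-- Pointwise "less preferred partner" (join) of two matchings, w.r.t. the worker
preferences of `A`. -/
def worse (A : SMInstance W F) (M1 M2 : W ≃ F) (w : W) : F :=
  if A.wr w (M1 w) ≤ A.wr w (M2 w) then M2 w else M1 w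

/-- Pointwise "more preferred partner" (meet) of two matchings, w.r.t. the worker
preferences of `A`. -/
def better (A : SMInstance W F) (M1 M2 : W ≃ F) (w : W) : F :=
  if A.wr w (M1 w) ≤ A.wr w (M2 w) then M1 w else M2 w

/-- `B` is obtained from `A` by an upward shift of worker `w0` in firm `f0`'s
preference list: all other lists are unchanged, the relative order of workers other
than `w0` in `f0`'s list is preserved, and the set of workers above `w0` in `f0`'s
list only shrinks. -/
def UpShift (A B : SMInstance W F) (w0 : W) (f0 : F) : Prop :=
  B.wr = A.wr ∧ (∀ f, f ≠ f0 → B.fr f = A.fr f) ∧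
  (∀ w1 w2, w1 ≠ w0 → w2 ≠ w0 → (B.fr f0 w1 < B.fr f0 w2 ↔ A.fr f0 w1 < A.fr f0 w2)) ∧
  (∀ w', B.fr f0 w' < B.fr f0 w0 → A.fr f0 w' < A.fr f0 w0)

/-- If `B` is obtained from `A` by an upward shift of worker `w0` in firm `f0`'s
list, and `M` is stable under `A` but not under `B`, then the unique blocking pair
of `M` under `B` is `(w0, f0)`. -/
theorem stmt6 (A B : SMInstance W F) (w0 : W) (f0 : F) (h : UpShift A B w0 f0)
    (M : W ≃ F) (hA : A.Stable M) (hB : ¬ B.Stable M) :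
    B.Blocking M w0 f0 ∧ ∀ x y, B.Blocking M x y → x = w0 ∧ y = f0 := by
  obtain ⟨hwr, hfr, hord, hup⟩ := h
  have uniq : ∀ x y, B.Blocking M x y → x = w0 ∧ y = f0 := by
    rintro x y ⟨hne, hw, hf⟩
    by_cases hy : y = f0
    · subst hy
      by_cases hx : x = w0
      · exact ⟨hx, rfl⟩
      · exfalso
        apply hA x y
        refine ⟨hne, by rwa [hwr] at hw, ?_⟩
        by_cases hm : M.symm y = w0
        · rw [hm] at hf ⊢
          exact hup x hf
        · exact (hord x _ hx hm).mp hf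
    · exact absurd ⟨hne, by rwa [hwr] at hw, by rwa [hfr y hy] at hf⟩ (hA x y)
  refine ⟨?_, uniq⟩
  simp only [SMInstance.Stable, not_forall, not_not] at hB
  obtain ⟨x, y, hxy⟩ := hB
  obtain ⟨hx, hy⟩ := uniq x y hxy
  subst hx; subst hy; exact hxy
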